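/- Let ρ be positive definite, V an operator on a finite-dimensional Hilbert space, γ⁺, γ⁻ > 0 with (γ⁺)^{1/2} ρ^{1/2} V = (γ⁻)^{1/2} V ρ^{1/2}. Then ρ V = (γ⁻/γ⁺) V ρ and ρ V* = (γ⁺/γ⁻) V* ρ. -/

import Mathlib

open Matrix ComplexOrder

/-- The positive semidefinite square root of a positive semidefinite matrix, as defined in
Mathlib (Dec 2024); removed from current Mathlib. -/
noncomputable def Matrix.PosSemidef.sqrt {n 𝕜 : Type*} [Fintype n] [RCLike 𝕜] [DecidableEq n]
    {A : Matrix n n 𝕜} (hA : A.PosSemidef) : Matrix n n 𝕜 :=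
  hA.1.eigenvectorUnitary.1 * diagonal ((↑) ∘ (√·) ∘ hA.1.eigenvalues) *
    (star hA.1.eigenvectorUnitary : Matrix n n 𝕜)

theorem Matrix.PosSemidef.sqrt_mul_self {n 𝕜 : Type*} [Fintype n] [RCLike 𝕜] [DecidableEq n]
    {A : Matrix n n 𝕜} (hA : A.PosSemidef) : hA.sqrt * hA.sqrt = A := by
  have hU : (star hA.1.eigenvectorUnitary : Matrix n n 𝕜) * hA.1.eigenvectorUnitary.1 = 1 :=
    Unitary.star_mul_self_of_mem hA.1.eigenvectorUnitary.2
  conv_rhs => rw [hA.1.spectral_theorem, Unitary.conjStarAlgAut_apply]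
  unfold Matrix.PosSemidef.sqrt
  rw [show ∀ a b c d e f : Matrix n n 𝕜, a * b * c * (d * e * f) = a * b * (c * d) * e * f by
    intros; simp only [mul_assoc]]
  rw [hU, mul_one, mul_assoc _ (diagonal _) (diagonal _), diagonal_mul_diagonal]
  congr 3
  funext i
  simp only [Function.comp]
  rw [← RCLike.ofReal_mul, Real.mul_self_sqrt (hA.eigenvalues_nonneg i)]

theorem Matrix.PosSemidef.posSemidef_sqrt {n 𝕜 : Type*} [Fintype n] [RCLike 𝕜] [DecidableEq n]
    {A : Matrix n n 𝕜} (hA : A.PosSemidef) : hA.sqrt.PosSemidef := by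
  unfold Matrix.PosSemidef.sqrt
  have h := (PosSemidef.diagonal (d := ((↑) ∘ (√·) ∘ hA.1.eigenvalues : n → 𝕜)) (fun i => by
    simp only [Pi.zero_apply, Function.comp_apply]
    exact RCLike.ofReal_nonneg.mpr (Real.sqrt_nonneg _)))
  have := h.mul_mul_conjTranspose_same (hA.1.eigenvectorUnitary.1)
  rw [Matrix.star_eq_conjTranspose]
  exact this

/-- If ρ is positive definite, γ⁺, γ⁻ > 0, and
(γ⁺)^{1/2} ρ^{1/2} V = (γ⁻)^{1/2} V ρ^{1/2}, then ρV = (γ⁻/γ⁺)Vρ and ρV* = (γ⁺/γ⁻)V*ρ. -/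
theorem rho_V_commutation_of_sqrt_intertwining (d : ℕ) (ρ : Matrix (Fin d) (Fin d) ℂ)
    (hρ : ρ.PosDef) (V : Matrix (Fin d) (Fin d) ℂ)
    (γp γm : ℝ) (hγp : 0 < γp) (hγm : 0 < γm)
    (h : (Real.sqrt γp : ℂ) • (hρ.posSemidef.sqrt * V)
        = (Real.sqrt γm : ℂ) • (V * hρ.posSemidef.sqrt)) :
    ρ * V = ((γm / γp : ℝ) : ℂ) • (V * ρ) ∧ ρ * Vᴴ = ((γp / γm : ℝ) : ℂ) • (Vᴴ * ρ) := by
  set S := hρ.posSemidef.sqrt with hS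
  have hSS : S * S = ρ := hρ.posSemidef.sqrt_mul_self
  have hSh : Sᴴ = S := hρ.posSemidef.posSemidef_sqrt.isHermitian
  have hp0 : (Real.sqrt γp : ℂ) ≠ 0 := by
    exact_mod_cast (Real.sqrt_pos.mpr hγp).ne'
  have hm0 : (Real.sqrt γm : ℂ) ≠ 0 := by
    exact_mod_cast (Real.sqrt_pos.mpr hγm).ne'
  set c : ℂ := (Real.sqrt γm : ℂ) / (Real.sqrt γp : ℂ) with hc
  have h1 : S * V = c • (V * S) := by
    have := congrArg (fun M => ((Real.sqrt γp : ℂ)⁻¹) • M) h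
    simp only [smul_smul, inv_mul_cancel₀ hp0, one_smul] at this
    rw [this]
    congr 1
    rw [hc]; ring
  have hc2 : c * c = ((γm / γp : ℝ) : ℂ) := by
    rw [hc]
    push_cast
    rw [div_mul_div_comm, ← Complex.ofReal_mul, ← Complex.ofReal_mul,
      Real.mul_self_sqrt hγm.le, Real.mul_self_sqrt hγp.le]
  have hc0 : c ≠ 0 := div_ne_zero hm0 hp0
  have e1 : ρ * V = ((γm / γp : ℝ) : ℂ) • (V * ρ) := by
    calc ρ * V = S * (S * V) := by rw [← mul_assoc, hSS]
      _ = S * (c • (V * S)) := by rw [h1]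
      _ = c • ((S * V) * S) := by rw [mul_smul_comm, mul_assoc]
      _ = c • ((c • (V * S)) * S) := by rw [h1]
      _ = (c * c) • (V * (S * S)) := by rw [smul_mul_assoc, smul_smul, mul_assoc]
      _ = ((γm / γp : ℝ) : ℂ) • (V * ρ) := by rw [hc2, hSS]
  have h2 : S * Vᴴ = c⁻¹ • (Vᴴ * S) := by
    have := congrArg conjTranspose h1
    simp only [conjTranspose_mul, conjTranspose_smul, hSh] at this
    have hcc : star c = c := by
      rw [hc]; simp [Complex.star_def, Complex.conj_ofReal]
    rw [hcc] at this
    -- this : Vᴴ * S = c • (S * Vᴴ)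
    rw [this, smul_smul, inv_mul_cancel₀ hc0, one_smul]
  have hc2' : c⁻¹ * c⁻¹ = ((γp / γm : ℝ) : ℂ) := by
    rw [← mul_inv, hc2]
    push_cast
    rw [inv_div]
  refine ⟨e1, ?_⟩
  calc ρ * Vᴴ = S * (S * Vᴴ) := by rw [← mul_assoc, hSS]
    _ = S * (c⁻¹ • (Vᴴ * S)) := by rw [h2]
    _ = c⁻¹ • ((S * Vᴴ) * S) := by rw [mul_smul_comm, mul_assoc]
    _ = c⁻¹ • ((c⁻¹ • (Vᴴ * S)) * S) := by rw [h2]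
    _ = (c⁻¹ * c⁻¹) • (Vᴴ * (S * S)) := by rw [smul_mul_assoc, smul_smul, mul_assoc]
    _ = ((γp / γm : ℝ) : ℂ) • (Vᴴ * ρ) := by rw [hc2', hSS]
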